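/- Let (αₙ)_{n≥1} be an enumeration of the complex numbers algebraic over ℚ, and define 𝒰(w,z) = Σ_{n=1}^∞ [wⁿ / ((1 + Σ_{k=1}^{n} |σₖ(α₁,…,αₙ)|)(|w|ⁿ + 1) · n!)] · ∏_{k=1}^{n} (z − αₖ). Then the series defining 𝒰 converges for all (w,z) ∈ ℂ × ℂ, and |𝒰(w,z)| ≤ e^{max{1,|z|}} for all w, z ∈ ℂ. -/

import Mathlib

open Finset

/-- `a` (restricted to indices `n ≥ 1`) is an enumeration of the complex numbers
that are algebraic over ℚ: a bijection from the positive integers onto the set of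
algebraic numbers. -/
def IsAlgEnumeration (a : ℕ → ℂ) : Prop :=
  Set.BijOn a (Set.Ici 1) {x : ℂ | IsAlgebraic ℚ x}

/-- The `k`-th elementary symmetric function `σ_k (a 1, …, a n)`:
the sum of all products of `k` distinct terms among `a 1, …, a n`. -/
noncomputable def esymmVal (a : ℕ → ℂ) (n k : ℕ) : ℂ :=
  ∑ s ∈ Finset.powersetCard k (Finset.Icc 1 n), ∏ i ∈ s, a i

/-- The `n`-th term (for `n ≥ 1`) of the series defining the function `𝒰`:
`wⁿ / ((1 + Σ_{k=1}^n |σ_k(α₁,…,αₙ)|) (|w|ⁿ + 1) n!) ⋅ (z - α₁) ⋯ (z - αₙ)`. -/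
noncomputable def Uterm (a : ℕ → ℂ) (w z : ℂ) (n : ℕ) : ℂ :=
  w ^ n /
      (((1 + ∑ k ∈ Finset.Icc 1 n, ‖esymmVal a n k‖ : ℝ) : ℂ) *
        (((‖w‖ ^ n + 1 : ℝ) : ℂ)) * (Nat.factorial n : ℂ)) *
    ∏ k ∈ Finset.Icc 1 n, (z - a k)

/-- The function `𝒰(w, z) = Σ_{n=1}^∞ Uterm a w z n`. -/
noncomputable def U (a : ℕ → ℂ) (w z : ℂ) : ℂ :=
  ∑' n : ℕ, Uterm a w z (n + 1)

lemma esymmVal_zero (a : ℕ → ℂ) (n : ℕ) : esymmVal a n 0 = 1 := by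
  simp [esymmVal]

lemma sum_powerset_card' {β : Type*} [AddCommMonoid β] (s : Finset ℕ) (F : Finset ℕ → β) :
    ∑ t ∈ s.powerset, F t = ∑ j ∈ range (#s + 1), ∑ t ∈ powersetCard j s, F t := by
  rw [← Finset.sum_fiberwise_of_maps_to (g := Finset.card) (t := range (#s + 1))
    (fun t ht => by rw [Finset.mem_powerset] at ht; rw [Finset.mem_range]; exact Nat.lt_succ_of_le (Finset.card_le_card ht))]
  refine Finset.sum_congr rfl fun j _ => ?_
  rw [Finset.powersetCard_eq_filter]

lemma prod_sub_bound (a : ℕ → ℂ) (z : ℂ) (n : ℕ) :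
    ‖(∏ k ∈ Icc 1 n, (z - a k))‖ ≤
      (1 + ∑ k ∈ Icc 1 n, ‖(esymmVal a n k)‖) * (max 1 (‖z‖)) ^ n := by
  set M := max 1 (‖z‖) with hM
  have hM1 : (1:ℝ) ≤ M := le_max_left _ _
  have hM0 : (0:ℝ) ≤ M := by linarith
  have hz : ‖z‖ ≤ M := le_max_right _ _
  have hcard : #(Icc 1 n) = n := by simp
  have hexp : ∏ k ∈ Icc 1 n, (z - a k)
      = ∑ j ∈ range (n+1), ((-1:ℂ)^j * esymmVal a n j) * z ^ (n - j) := by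
    calc ∏ k ∈ Icc 1 n, (z - a k) = ∏ k ∈ Icc 1 n, (-a k + z) :=
        Finset.prod_congr rfl fun k _ => by ring
    _ = ∑ t ∈ (Icc 1 n).powerset, (∏ i ∈ t, (-a i)) * ∏ i ∈ (Icc 1 n) \ t, z :=
        Finset.prod_add _ _ _
    _ = ∑ j ∈ range (n+1), ∑ t ∈ powersetCard j (Icc 1 n),
          ((-1:ℂ)^j * ∏ i ∈ t, a i) * z ^ (n - j) := by
        rw [sum_powerset_card', hcard]
        refine Finset.sum_congr rfl fun j hj => Finset.sum_congr rfl fun t ht => ?_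
        obtain ⟨hts, htc⟩ := Finset.mem_powersetCard.1 ht
        rw [Finset.prod_const, Finset.card_sdiff_of_subset hts, htc, hcard]
        congr 1
        calc ∏ i ∈ t, (-a i) = ∏ i ∈ t, ((-1) * a i) :=
            Finset.prod_congr rfl fun i _ => by ring
        _ = (-1:ℂ)^j * ∏ i ∈ t, a i := by
            rw [Finset.prod_mul_distrib, Finset.prod_const, htc]
    _ = _ := by
        refine Finset.sum_congr rfl fun j hj => ?_
        rw [esymmVal, Finset.mul_sum, Finset.sum_mul]
  rw [hexp]
  calc ‖(∑ j ∈ range (n+1), ((-1:ℂ)^j * esymmVal a n j) * z ^ (n - j))‖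
      ≤ ∑ j ∈ range (n+1), ‖(((-1:ℂ)^j * esymmVal a n j) * z ^ (n - j))‖ :=
        norm_sum_le _ _
    _ ≤ ∑ j ∈ range (n+1), ‖(esymmVal a n j)‖ * M ^ n := by
        refine Finset.sum_le_sum fun j hj => ?_
        rw [norm_mul, norm_mul, norm_pow, norm_pow]
        simp only [norm_neg, norm_one, one_pow, one_mul]
        refine mul_le_mul_of_nonneg_left ?_ (norm_nonneg _)
        calc ‖z‖ ^ (n - j) ≤ M ^ (n - j) :=
            pow_le_pow_left₀ (norm_nonneg _) hz _
        _ ≤ M ^ n := pow_le_pow_right₀ hM1 (Nat.sub_le _ _)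
    _ ≤ (1 + ∑ k ∈ Icc 1 n, ‖(esymmVal a n k)‖) * M ^ n := by
        have h0 := Finset.sum_range_succ' (fun j => ‖(esymmVal a n j)‖ * M ^ n) n
        have h1 : ∑ k ∈ Icc 1 n, ‖(esymmVal a n k)‖ * M ^ n
            = ∑ i ∈ range n, ‖(esymmVal a n (i+1))‖ * M ^ n := by
          rw [← Finset.Ico_add_one_right_eq_Icc, Finset.sum_Ico_eq_sum_range]
          simp [add_comm]
        rw [h0, esymmVal_zero, norm_one, one_mul, add_mul, one_mul, ← Finset.sum_mul,
          ← Finset.sum_mul] at *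
        linarith [h1]

lemma Uterm_bound (a : ℕ → ℂ) (w z : ℂ) (n : ℕ) :
    ‖(Uterm a w z n)‖ ≤ (max 1 (‖z‖)) ^ n / (Nat.factorial n : ℝ) := by
  have hM1 : (1:ℝ) ≤ max 1 (‖z‖) := le_max_left _ _
  set M : ℝ := max 1 (‖z‖)
  set S : ℝ := ∑ k ∈ Icc 1 n, ‖(esymmVal a n k)‖ with hS
  have hS0 : 0 ≤ S := Finset.sum_nonneg fun k _ => norm_nonneg _
  have hw0 : (0:ℝ) ≤ ‖w‖ ^ n := pow_nonneg (norm_nonneg _) _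
  have hfac : (0:ℝ) < (Nat.factorial n : ℝ) := Nat.cast_pos.mpr n.factorial_pos
  have e1 : ‖((1 + S : ℝ) : ℂ)‖ = 1 + S := by
    rw [Complex.norm_real, Real.norm_eq_abs, abs_of_nonneg (by linarith)]
  have e2 : ‖((‖w‖ ^ n + 1 : ℝ) : ℂ)‖ = ‖w‖ ^ n + 1 := by
    rw [Complex.norm_real, Real.norm_eq_abs, abs_of_nonneg (by linarith)]
  have e3 : ‖((Nat.factorial n : ℕ) : ℂ)‖ = (Nat.factorial n : ℝ) :=
    Complex.norm_natCast _
  have habs : ‖(Uterm a w z n)‖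
      = ‖w‖ ^ n / ((1 + S) * (‖w‖ ^ n + 1) * (Nat.factorial n : ℝ))
        * ‖(∏ k ∈ Icc 1 n, (z - a k))‖ := by
    rw [Uterm, norm_mul, norm_div, norm_pow, norm_mul, norm_mul, e1, e2, e3]
  rw [habs]
  have hden : 0 < (1 + S) * (‖w‖ ^ n + 1) * (Nat.factorial n : ℝ) :=
    mul_pos (mul_pos (by linarith) (by linarith)) hfac
  calc ‖w‖ ^ n / ((1 + S) * (‖w‖ ^ n + 1) * (Nat.factorial n : ℝ))
        * ‖(∏ k ∈ Icc 1 n, (z - a k))‖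
      ≤ ‖w‖ ^ n / ((1 + S) * (‖w‖ ^ n + 1) * (Nat.factorial n : ℝ))
        * ((1 + S) * M ^ n) :=
        mul_le_mul_of_nonneg_left (prod_sub_bound a z n) (div_nonneg hw0 hden.le)
    _ ≤ M ^ n / (Nat.factorial n : ℝ) := by
        rw [div_mul_eq_mul_div, div_le_div_iff₀ hden hfac]
        have hMn : (0:ℝ) ≤ M ^ n := pow_nonneg (by linarith) _
        nlinarith [mul_nonneg (mul_nonneg hS0 hMn) (mul_nonneg hw0 hfac.le),
          mul_nonneg hMn hfac.le, mul_nonneg (mul_nonneg hS0 hMn) hfac.le]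

/-- The series defining `𝒰` converges everywhere, and `|𝒰(w,z)| ≤ e ^ max 1 |z|`. -/
theorem U_summable_and_bound (a : ℕ → ℂ) (ha : IsAlgEnumeration a) (w z : ℂ) :
    Summable (fun n : ℕ => Uterm a w z (n + 1)) ∧
      ‖(U a w z)‖ ≤ Real.exp (max 1 (‖z‖)) := by
  set M : ℝ := max 1 (‖z‖) with hMdef
  have hsumf : Summable (fun n : ℕ => M ^ n / (Nat.factorial n : ℝ)) :=
    Real.summable_pow_div_factorial M
  have hg : Summable (fun n : ℕ => M ^ (n+1) / (Nat.factorial (n+1) : ℝ)) :=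
    (summable_nat_add_iff 1).2 hsumf
  have hbound : ∀ n : ℕ, ‖Uterm a w z (n + 1)‖ ≤ M ^ (n+1) / (Nat.factorial (n+1) : ℝ) :=
    fun n => Uterm_bound a w z (n+1)
  have hsum : Summable (fun n : ℕ => Uterm a w z (n + 1)) :=
    Summable.of_norm_bounded hg hbound
  refine ⟨hsum, ?_⟩
  have hnorms : Summable (fun n : ℕ => ‖Uterm a w z (n + 1)‖) :=
    Summable.of_nonneg_of_le (fun n => norm_nonneg _) hbound hg
  have hexp : Real.exp M = ∑' n : ℕ, M ^ n / (Nat.factorial n : ℝ) := by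
    rw [Real.exp_eq_exp_ℝ, NormedSpace.exp_eq_tsum_div]
  have hshift : (∑' n : ℕ, M ^ n / (Nat.factorial n : ℝ))
      = 1 + ∑' n : ℕ, M ^ (n+1) / (Nat.factorial (n+1) : ℝ) := by
    rw [Summable.tsum_eq_zero_add hsumf]
    norm_num
  calc ‖(U a w z)‖ = ‖∑' n : ℕ, Uterm a w z (n + 1)‖ := rfl
    _ ≤ ∑' n : ℕ, ‖Uterm a w z (n + 1)‖ := norm_tsum_le_tsum_norm hnorms
    _ ≤ ∑' n : ℕ, M ^ (n+1) / (Nat.factorial (n+1) : ℝ) := Summable.tsum_le_tsum hbound hnorms hg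
    _ ≤ Real.exp M := by
        have hM0 : (0:ℝ) ≤ M := le_trans zero_le_one (le_max_left _ _)
        have hpos : (0:ℝ) ≤ ∑' n : ℕ, M ^ (n+1) / (Nat.factorial (n+1) : ℝ) :=
          tsum_nonneg fun n => div_nonneg (pow_nonneg hM0 _) (Nat.cast_nonneg _)
        rw [hexp, hshift]
        linarith
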